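/- Let q > 1 and let U ∈ C²([0,T]) satisfy U''(t) ≥ 0 on [0,T], U(0) ≥ 0 and U'(0) > 0. Define φ(t) = (U(t)^{q+2} − U(0)^{q+2})/(q+2) − U(0)^{q+1}(U(t) − U(0)). Then φ(t) ≥ U(t)^{q+2} / (4(q+2)²) for all t ∈ [0,T] with t ≥ (2q+3)U(0)/U'(0). -/

import Mathlib

open Real Set

/-- Lower bound for the auxiliary function
`φ(t) = (U(t)^{q+2} - U(0)^{q+2})/(q+2) - U(0)^{q+1}(U(t) - U(0))`:
if `U'' ≥ 0`, `U(0) ≥ 0`, `U'(0) > 0`, then `φ(t) ≥ U(t)^{q+2}/(4(q+2)²)` for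
`t ∈ [0,T]` with `t ≥ (2q+3)U(0)/U'(0)`. -/
theorem phi_lower_bound
    (q T : ℝ) (U U' U'' : ℝ → ℝ)
    (hq : 1 < q)
    (hU' : ∀ t ∈ Icc (0:ℝ) T, HasDerivWithinAt U (U' t) (Icc 0 T) t)
    (hU'' : ∀ t ∈ Icc (0:ℝ) T, HasDerivWithinAt U' (U'' t) (Icc 0 T) t)
    (hUc : ContinuousOn U'' (Icc 0 T))
    (hU''pos : ∀ t ∈ Icc (0:ℝ) T, 0 ≤ U'' t)
    (hU0 : 0 ≤ U 0) (hU'0 : 0 < U' 0) :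
    ∀ t ∈ Icc (0:ℝ) T, (2 * q + 3) * U 0 / U' 0 ≤ t →
      U t ^ (q + 2) / (4 * (q + 2) ^ 2)
        ≤ (U t ^ (q + 2) - U 0 ^ (q + 2)) / (q + 2) - U 0 ^ (q + 1) * (U t - U 0) := by
  intro t ht htt
  obtain ⟨ht0, htT⟩ := ht
  have h0mem : (0:ℝ) ∈ Icc (0:ℝ) T := ⟨le_refl 0, le_trans ht0 htT⟩
  have hUcont : ContinuousOn U (Icc 0 T) := fun x hx => (hU' x hx).continuousWithinAt
  have hU'cont : ContinuousOn U' (Icc 0 T) := fun x hx => (hU'' x hx).continuousWithinAt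
  -- U' is monotone on [0,T]
  have hU'mono : MonotoneOn U' (Icc 0 T) := by
    apply monotoneOn_of_deriv_nonneg (convex_Icc 0 T) hU'cont
    · intro x hx
      rw [interior_Icc] at hx
      exact ((hU'' x (Ioo_subset_Icc_self hx)).hasDerivAt
        (Icc_mem_nhds hx.1 hx.2)).differentiableAt.differentiableWithinAt
    · intro x hx
      rw [interior_Icc] at hx
      rw [((hU'' x (Ioo_subset_Icc_self hx)).hasDerivAt (Icc_mem_nhds hx.1 hx.2)).deriv]
      exact hU''pos x (Ioo_subset_Icc_self hx)
  -- g x = U x - U' 0 * x is monotone on [0,T]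
  have hg : MonotoneOn (fun x => U x - U' 0 * x) (Icc 0 T) := by
    apply monotoneOn_of_deriv_nonneg (convex_Icc 0 T)
      (hUcont.sub (continuousOn_const.mul continuousOn_id))
    · intro x hx
      rw [interior_Icc] at hx
      exact (((hU' x (Ioo_subset_Icc_self hx)).hasDerivAt (Icc_mem_nhds hx.1 hx.2)).sub
        ((hasDerivAt_id x).const_mul (U' 0))).differentiableAt.differentiableWithinAt
    · intro x hx
      rw [interior_Icc] at hx
      rw [show (U - (fun x => U' 0) * id) = (U - fun y => U' 0 * id y) from rfl]
      rw [(((hU' x (Ioo_subset_Icc_self hx)).hasDerivAt (Icc_mem_nhds hx.1 hx.2)).sub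
        ((hasDerivAt_id x).const_mul (U' 0))).deriv]
      have := hU'mono h0mem (Ioo_subset_Icc_self hx) hx.1.le
      simp only [mul_one]
      linarith
  have hlin : U 0 + U' 0 * t ≤ U t := by
    have := hg h0mem ⟨ht0, htT⟩ ht0
    simp only [mul_zero, sub_zero] at this
    linarith
  set a := U 0 with ha_def
  set u := U t with hu_def
  have hc : (3:ℝ) < q + 2 := by linarith
  have hct : (2 * q + 3) * a ≤ U' 0 * t := by
    rw [div_le_iff₀ hU'0] at htt
    linarith [htt]
  have hau : 2 * (q + 2) * a ≤ u := by linarith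
  have hu0 : (0:ℝ) ≤ u := by nlinarith
  rcases eq_or_lt_of_le hU0 with ha0 | hapos
  · -- a = 0
    rw [← ha0, Real.zero_rpow (by linarith : q + 2 ≠ 0),
      Real.zero_rpow (by linarith : q + 1 ≠ 0), zero_mul, sub_zero, sub_zero]
    apply div_le_div_of_nonneg_left (Real.rpow_nonneg hu0 _) (by linarith) (by nlinarith)
  · -- a > 0
    have hupos : (0:ℝ) < u := by nlinarith
    have hK : (1:ℝ) ≤ 2 * (q + 2) := by linarith
    have h1 : a ≤ u / (2 * (q + 2)) := by
      rw [le_div_iff₀ (by linarith : (0:ℝ) < 2 * (q + 2))]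
      linarith [hau]
    have h2 : a ^ (q + 1) ≤ u ^ (q + 1) / (2 * (q + 2)) ^ (q + 1) := by
      calc a ^ (q + 1) ≤ (u / (2 * (q + 2))) ^ (q + 1) :=
            Real.rpow_le_rpow hU0 h1 (by linarith)
        _ = u ^ (q + 1) / (2 * (q + 2)) ^ (q + 1) :=
            Real.div_rpow hu0 (by linarith) _
    have h3 : 4 * (q + 2) ^ 2 ≤ (2 * (q + 2)) ^ (q + 1) := by
      have := Real.rpow_le_rpow_of_exponent_le hK (by linarith : (2:ℝ) ≤ q + 1)
      rw [Real.rpow_two] at this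
      nlinarith [this]
    have h4 : u ^ (q + 1) * u = u ^ (q + 2) := by
      rw [← Real.rpow_add_one hupos.ne' (q + 1)]
      ring_nf
    have hX : (0:ℝ) ≤ u ^ (q + 2) := Real.rpow_nonneg hu0 _
    have hA1 : (0:ℝ) ≤ a ^ (q + 1) := Real.rpow_nonneg hU0 _
    have hac : a ^ (q + 2) = a ^ (q + 1) * a := by
      rw [← Real.rpow_add_one hapos.ne' (q + 1)]
      ring_nf
    -- key : a^{q+1} * u ≤ u^{q+2} / (4 (q+2)^2)
    have key : a ^ (q + 1) * u ≤ u ^ (q + 2) / (4 * (q + 2) ^ 2) := by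
      have hKp : (0:ℝ) < (2 * (q + 2)) ^ (q + 1) := Real.rpow_pos_of_pos (by linarith) _
      calc a ^ (q + 1) * u ≤ u ^ (q + 1) / (2 * (q + 2)) ^ (q + 1) * u := by
            apply mul_le_mul_of_nonneg_right h2 hu0
        _ = u ^ (q + 2) / (2 * (q + 2)) ^ (q + 1) := by rw [div_mul_eq_mul_div, h4]
        _ ≤ u ^ (q + 2) / (4 * (q + 2) ^ 2) :=
            div_le_div_of_nonneg_left hX (by nlinarith) h3
    have h5 : a ^ (q + 1) * a / (q + 2) ≤ a ^ (q + 1) * a :=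
      div_le_self (by positivity) (by linarith)
    have hmid : u ^ (q + 2) / (4 * (q + 2) ^ 2) + u ^ (q + 2) / (4 * (q + 2) ^ 2)
        ≤ u ^ (q + 2) / (q + 2) := by
      have hne : q + 2 ≠ 0 := by linarith
      have heq : u ^ (q + 2) / (4 * (q + 2) ^ 2) + u ^ (q + 2) / (4 * (q + 2) ^ 2)
          = u ^ (q + 2) / (2 * (q + 2) ^ 2) := by
        field_simp
        ring
      rw [heq]
      apply div_le_div_of_nonneg_left hX (by linarith) (by nlinarith)
    have expand : (u ^ (q + 2) - a ^ (q + 2)) / (q + 2)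
        = u ^ (q + 2) / (q + 2) - a ^ (q + 1) * a / (q + 2) := by
      rw [hac]; ring
    rw [expand, hac] at *
    linarith [key, h5, hmid, mul_nonneg hA1 hU0]
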